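/- Let X be an n×n real positive semidefinite matrix, Σ an m×m real positive definite matrix, and C an m×n real matrix. For an n×m real matrix Γ define φ(X, Γ) = (I − Γ C) X (I − Γ C)ᵀ + Γ Σ Γᵀ, and set Γ* = X Cᵀ (C X Cᵀ + Σ)⁻¹. Then φ(X, Γ*) = X − X Cᵀ (C X Cᵀ + Σ)⁻¹ C X. -/

import Mathlib

open Matrix

/-- The value of `φ(X, Γ) = (I − Γ C) X (I − Γ C)ᵀ + Γ Sig Γᵀ` at the optimal
gain `Γ* = X Cᵀ (C X Cᵀ + Sig)⁻¹` equals `X − X Cᵀ (C X Cᵀ + Sig)⁻¹ C X`. -/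
theorem phi_at_optimal_gain
    {n m : ℕ}
    (X : Matrix (Fin n) (Fin n) ℝ) (hX : X.PosSemidef)
    (Sig : Matrix (Fin m) (Fin m) ℝ) (hSig : Sig.PosDef)
    (C : Matrix (Fin m) (Fin n) ℝ)
    (φ : Matrix (Fin n) (Fin m) ℝ → Matrix (Fin n) (Fin n) ℝ)
    (hφ : ∀ Γ, φ Γ = (1 - Γ * C) * X * (1 - Γ * C)ᵀ + Γ * Sig * Γᵀ)
    (Γstar : Matrix (Fin n) (Fin m) ℝ)
    (hΓstar : Γstar = X * Cᵀ * (C * X * Cᵀ + Sig)⁻¹) :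
    φ Γstar = X - X * Cᵀ * (C * X * Cᵀ + Sig)⁻¹ * C * X := by
  subst hΓstar
  rw [hφ]
  set S := C * X * Cᵀ + Sig with hSdef
  set T := S⁻¹ with hTdef
  have hXt : Xᵀ = X := by
    have := hX.isHermitian
    rw [← conjTranspose_eq_transpose_of_trivial]; exact this
  have hSigt : Sigᵀ = Sig := by
    have := hSig.isHermitian
    rw [← conjTranspose_eq_transpose_of_trivial]; exact this
  have hSt : Sᵀ = S := by
    simp [hSdef, transpose_add, transpose_mul, hXt, hSigt, Matrix.mul_assoc]
  have hCX : (C * X * Cᵀ).PosSemidef := by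
    have := hX.mul_mul_conjTranspose_same C
    rwa [conjTranspose_eq_transpose_of_trivial] at this
  have hSpd : S.PosDef := Matrix.PosDef.posSemidef_add hCX hSig
  have hTS : T * S = 1 := Matrix.nonsing_inv_mul S ((Matrix.isUnit_iff_isUnit_det S).1 hSpd.isUnit)
  have hTt : Tᵀ = T := by rw [hTdef, Matrix.transpose_nonsing_inv, hSt]
  have key : (T * (C * X * Cᵀ) + T * Sig) * (T * (C * X)) = T * (C * X) := by
    rw [← Matrix.mul_add, ← hSdef, hTS, Matrix.one_mul]
  simp only [Matrix.add_mul, Matrix.mul_assoc] at key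
  simp only [transpose_sub, transpose_one, transpose_mul, transpose_transpose, hXt, hTt,
    Matrix.sub_mul, Matrix.mul_sub, Matrix.one_mul, Matrix.mul_one, Matrix.mul_assoc]
  have key2 : X * (Cᵀ * (T * (C * (X * (Cᵀ * (T * (C * X))))))) +
      X * (Cᵀ * (T * (Sig * (T * (C * X))))) = X * (Cᵀ * (T * (C * X))) := by
    rw [← Matrix.mul_add X, ← Matrix.mul_add Cᵀ, key]
  have absLem : ∀ (x a b1 b2 : Matrix (Fin n) (Fin n) ℝ), b1 + b2 = a →
      x - a - (a - b1) + b2 = x - a := by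
    intro x a b1 b2 h
    subst h
    abel
  exact absLem _ _ _ _ key2
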